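/- For every metric space X, the functions ad_X and ãd_X have the same growth type: ad_X ≈ ãd_X, where ãd_X(λ) = min{m_λ(𝒰) : 𝒰 a uniformly bounded cover of X} − 1. -/

import Mathlib

open scoped ENNReal

namespace AsdimGrowth

variable {X : Type*}

/-- `U` is a cover of `X`. -/
def IsCover (U : Set (Set X)) : Prop := ∀ x : X, ∃ u ∈ U, x ∈ u

/-- A family of subsets is uniformly bounded if the diameters of its members
admit a common finite bound. -/
def UnifBdd (d : X → X → ℝ) (U : Set (Set X)) : Prop :=
  ∃ R : ℝ, ∀ u ∈ U, ∀ a ∈ u, ∀ b ∈ u, d a b ≤ R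

/-- The multiplicity of a family: the supremum over points `x` of the number of
members containing `x` (an extended natural number). -/
noncomputable def mult (U : Set (Set X)) : ℕ∞ :=
  ⨆ x : X, {u | u ∈ U ∧ x ∈ u}.encard

/-- `LebGT d U lam` says the Lebesgue number of `U` exceeds `lam`: there is `l > lam`
such that every subset of diameter at most `l` lies in some member of `U`. -/
def LebGT (d : X → X → ℝ) (U : Set (Set X)) (lam : ℝ) : Prop :=
  ∃ l : ℝ, lam < l ∧ ∀ A : Set X, (∀ a ∈ A, ∀ b ∈ A, d a b ≤ l) → ∃ u ∈ U, A ⊆ u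

/-- The asymptotic dimension function `ad_X(lam)`: the least multiplicity of a
uniformly bounded cover of Lebesgue number `> lam`, minus one (`∞` if there is no
such cover). -/
noncomputable def adFun (d : X → X → ℝ) (lam : ℝ) : ℕ∞ :=
  sInf {m : ℕ∞ | ∃ U : Set (Set X),
    IsCover U ∧ UnifBdd d U ∧ LebGT d U lam ∧ mult U = m} - 1

/-- The asymptotic dimension function, valued in `ℝ≥0∞`. -/
noncomputable def adFunE (d : X → X → ℝ) : ℝ → ℝ≥0∞ :=
  fun lam => (adFun d lam : ℝ≥0∞)

/-- Growth domination of functions: `f ⪯ g` iff there is `k ∈ ℕ` with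
`f(x) ≤ k·g(kx+k)+k` for all `x > k`. -/
def FDom (f g : ℝ → ℝ≥0∞) : Prop :=
  ∃ k : ℕ, ∀ x : ℝ, (k : ℝ) < x → f x ≤ k * g (k * x + k) + k

/-- Growth equivalence of functions: `f ≈ g` iff `f ⪯ g` and `g ⪯ f`. -/
def FEquiv (f g : ℝ → ℝ≥0∞) : Prop := FDom f g ∧ FDom g f

end AsdimGrowth

open AsdimGrowth

namespace AsdimGrowth

/-- The `r`-multiplicity of a family: the supremum over points `x` of the number of
members meeting the closed ball `B(x,r)`. -/
noncomputable def multR {X : Type*} (d : X → X → ℝ) (U : Set (Set X)) (r : ℝ) : ℕ∞ :=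
  ⨆ x : X, {u | u ∈ U ∧ ∃ y ∈ u, d x y ≤ r}.encard

/-- The modified asymptotic dimension function `ãd_X(lam)`: the least
`lam`-multiplicity of a uniformly bounded cover, minus one. -/
noncomputable def adTilde {X : Type*} (d : X → X → ℝ) (lam : ℝ) : ℕ∞ :=
  sInf {m : ℕ∞ | ∃ U : Set (Set X),
    IsCover U ∧ UnifBdd d U ∧ multR d U lam = m} - 1

end AsdimGrowth

namespace AsdimGrowth

/-- Direction B: enlarging a cover of small `(lam+1)`-multiplicity gives a cover
with Lebesgue number `> lam` and small multiplicity. -/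
lemma adFun_le_adTilde {X : Type*} [MetricSpace X] (lam : ℝ) (hlam : 0 < lam) :
    adFun (fun a b : X => dist a b) lam
      ≤ adTilde (fun a b : X => dist a b) (lam + 1) := by
  refine tsub_le_tsub_right (sInf_le_sInf_of_isCoinitialFor ?_) 1
  rintro m ⟨U, hcov, ⟨R, hR⟩, hm⟩
  classical
  set N : Set X → Set X := fun u => {z : X | ∃ y ∈ u, dist z y ≤ lam + 1} with hN
  set V : Set (Set X) := insert ∅ (N '' U) with hV
  refine ⟨mult V, ⟨V, ?_, ?_, ?_, rfl⟩, ?_⟩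
  · -- cover
    intro x
    obtain ⟨u, hu, hxu⟩ := hcov x
    exact ⟨N u, Set.mem_insert_of_mem _ ⟨u, hu, rfl⟩, ⟨x, hxu, by simp [dist_self]; linarith⟩⟩
  · -- uniformly bounded
    refine ⟨R + 2 * (lam + 1), ?_⟩
    rintro v hv a ha b hb
    rcases hv with rfl | ⟨u, hu, rfl⟩
    · exact absurd ha (by simp)
    · obtain ⟨ya, hya, hda⟩ := ha
      obtain ⟨yb, hyb, hdb⟩ := hb
      have h1 := hR u hu ya hya yb hyb
      have h2 := dist_triangle a ya b
      have h3 := dist_triangle ya yb b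
      have := dist_comm b yb
      linarith
  · -- Lebesgue number > lam
    refine ⟨lam + 1, by linarith, fun A hA => ?_⟩
    rcases A.eq_empty_or_nonempty with rfl | ⟨a, ha⟩
    · exact ⟨∅, Set.mem_insert _ _, Set.empty_subset _⟩
    · obtain ⟨u, hu, hau⟩ := hcov a
      refine ⟨N u, Set.mem_insert_of_mem _ ⟨u, hu, rfl⟩, fun b hb => ⟨a, hau, hA b hb a ha⟩⟩
  · -- multiplicity bound
    rw [← hm]
    refine iSup_mono fun x => ?_
    refine le_trans (Set.encard_le_encard ?_) (Set.encard_image_le N _)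
    rintro v ⟨hv, hxv⟩
    rcases hv with rfl | ⟨u, hu, rfl⟩
    · exact absurd hxv (by simp)
    · exact ⟨u, ⟨hu, hxv⟩, rfl⟩

/-- Direction A: shrinking a cover of Lebesgue number `> 2 lam + 2` gives a cover
with small `lam`-multiplicity. -/
lemma adTilde_le_adFun {X : Type*} [MetricSpace X] (lam : ℝ) (hlam : 0 ≤ lam) :
    adTilde (fun a b : X => dist a b) lam
      ≤ adFun (fun a b : X => dist a b) (2 * lam + 2) := by
  refine tsub_le_tsub_right (sInf_le_sInf_of_isCoinitialFor ?_) 1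
  rintro m ⟨U, hcov, ⟨R, hR⟩, ⟨l, hl, hLeb⟩, hm⟩
  classical
  set S : Set X → Set X := fun u => {z : X | ∀ w : X, dist z w ≤ lam → w ∈ u} with hS
  refine ⟨multR (fun a b : X => dist a b) (S '' U) lam, ⟨S '' U, ?_, ?_, rfl⟩, ?_⟩
  · -- cover
    intro z
    have hdiam : ∀ a ∈ {w : X | dist z w ≤ lam}, ∀ b ∈ {w : X | dist z w ≤ lam},
        dist a b ≤ l := by
      intro a ha b hb
      have h1 : dist a z ≤ lam := by rw [dist_comm]; exact ha
      have h2 := dist_triangle a z b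
      have h3 : dist z b ≤ lam := hb
      linarith
    obtain ⟨u, hu, hsub⟩ := hLeb {w : X | dist z w ≤ lam} hdiam
    exact ⟨S u, ⟨u, hu, rfl⟩, fun w hw => hsub hw⟩
  · -- uniformly bounded
    refine ⟨R, ?_⟩
    rintro v ⟨u, hu, rfl⟩ a ha b hb
    exact hR u hu a (ha a (by simp [dist_self, hlam])) b (hb b (by simp [dist_self, hlam]))
  · -- multR bound
    rw [← hm]
    refine iSup_mono fun z => ?_
    refine le_trans (Set.encard_le_encard ?_) (Set.encard_image_le S _)
    rintro v ⟨⟨u, hu, rfl⟩, y, hy, hzy⟩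
    exact ⟨u, ⟨hu, hy z (by rw [dist_comm]; exact hzy)⟩, rfl⟩

end AsdimGrowth

/-- For every metric space `X`, the asymptotic dimension function
`ad_X` and the modified function `ãd_X` have the same growth type. -/
theorem adFun_equiv_adTilde {X : Type*} [MetricSpace X] :
    FEquiv (adFunE (fun a b : X => dist a b))
      (fun lam => (adTilde (fun a b : X => dist a b) lam : ℝ≥0∞)) := by
  constructor
  · refine ⟨1, fun x hx => ?_⟩
    have h1 : (0:ℝ) < x := lt_trans (by norm_num) hx
    have h := adFun_le_adTilde (X := X) x h1
    have harg : ((1:ℕ):ℝ) * x + ((1:ℕ):ℝ) = x + 1 := by push_cast; ring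
    simp only [harg, Nat.cast_one, one_mul]
    refine le_trans ?_ le_self_add
    exact ENat.toENNReal_le.mpr h
  · refine ⟨2, fun x hx => ?_⟩
    have h0 : (0:ℝ) ≤ x := le_of_lt (lt_trans (by norm_num) hx)
    have h := adTilde_le_adFun (X := X) x h0
    have harg : ((2:ℕ):ℝ) * x + ((2:ℕ):ℝ) = 2 * x + 2 := by push_cast; ring
    simp only [harg]
    refine le_trans (ENat.toENNReal_le.mpr h) ?_
    refine le_trans ?_ le_self_add
    show (adFun (fun a b : X => dist a b) (2 * x + 2) : ℝ≥0∞) ≤ _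
    exact le_mul_of_one_le_left zero_le (by norm_num)
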